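/- Let k ≥ 1, m ≥ 1 and n ≥ 1 be integers, and let A and B be n×n circulant matrices over R_{k,m} satisfying A·Aᵀ + B·Bᵀ = I_n. Then the code of length 4n over R_{k,m} generated by the rows of the block matrix [I_{2n} | M], where M is the 2n×2n block matrix with blocks [[A, B], [Bᵀ, Aᵀ]], is self-dual (the four-circulant construction). -/
import Mathlib


open MvPolynomial Matrix

set_option synthInstance.maxHeartbeats 1000000
set_option maxHeartbeats 1000000

/-- The ring `R_{k,m} = F_2[u,v]/⟨u^k, v^m⟩`. -/
noncomputable abbrev Rkm (k m : ℕ) : Type :=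
  MvPolynomial (Fin 2) (ZMod 2) ⧸
    (Ideal.span {(X 0 : MvPolynomial (Fin 2) (ZMod 2)) ^ k, (X 1 : MvPolynomial (Fin 2) (ZMod 2)) ^ m})

/-- The four-circulant construction: if `A`, `B` are `n×n` circulant matrices over `R_{k,m}`
with `A·Aᵀ + B·Bᵀ = I_n`, then the code of length `4n` generated by the rows of
`[I_{2n} | M]` with `M = [[A, B], [Bᵀ, Aᵀ]]` is self-dual over `R_{k,m}`. -/
theorem Rkm_four_circulant_selfDual (k m n : ℕ) (hk : 1 ≤ k) (hm : 1 ≤ m) (hn : 1 ≤ n)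
    (a b : Fin n → Rkm k m)
    (A B : Matrix (Fin n) (Fin n) (Rkm k m))
    (hA : A = Matrix.circulant a) (hB : B = Matrix.circulant b)
    (hAB : A * Aᵀ + B * Bᵀ = 1)
    (M : Matrix (Fin n ⊕ Fin n) (Fin n ⊕ Fin n) (Rkm k m))
    (hM : M = Matrix.fromBlocks A B Bᵀ Aᵀ)
    (C : Submodule (Rkm k m) ((Fin n ⊕ Fin n) ⊕ (Fin n ⊕ Fin n) → Rkm k m))
    (hC : C = Submodule.span (Rkm k m)
      (Set.range fun i : Fin n ⊕ Fin n =>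
        Sum.elim (Pi.single i (1 : Rkm k m)) (M i))) :
    (C : Set ((Fin n ⊕ Fin n) ⊕ (Fin n ⊕ Fin n) → Rkm k m)) =
      {w : (Fin n ⊕ Fin n) ⊕ (Fin n ⊕ Fin n) → Rkm k m |
        ∀ x ∈ C, ∑ p, x p * w p = 0} := by
  haveI : NeZero n := ⟨by omega⟩
  -- characteristic two
  have h0 : (1 : Rkm k m) + 1 = 0 := by
    have h := congrArg (algebraMap (ZMod 2) (Rkm k m)) (show (1 : ZMod 2) + 1 = 0 by decide)
    simpa using h
  have h2 : ∀ x : Rkm k m, x + x = 0 := by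
    intro x
    have : x + x = (1 + 1) * x := by ring
    rw [this, h0, zero_mul]
  have hMadd : ∀ (X : Matrix (Fin n) (Fin n) (Rkm k m)), X + X = 0 := by
    intro X; ext i j; exact h2 _
  -- M * Mᵀ = 1
  have hcomm : ∀ (c d : Fin n → (Rkm k m)),
      Matrix.circulant c * Matrix.circulant d = Matrix.circulant d * Matrix.circulant c :=
    fun c d => Matrix.circulant_mul_comm c d
  have hAt : Aᵀ = Matrix.circulant fun i => a (-i) := by rw [hA, Matrix.transpose_circulant]
  have hBt : Bᵀ = Matrix.circulant fun i => b (-i) := by rw [hB, Matrix.transpose_circulant]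
  have hABc : A * B = B * A := by rw [hA, hB]; exact hcomm _ _
  have hAtBt : Bᵀ * Aᵀ = Aᵀ * Bᵀ := by rw [hAt, hBt]; exact hcomm _ _
  have hAAt : Aᵀ * A = A * Aᵀ := by rw [hA, Matrix.transpose_circulant]; exact hcomm _ _
  have hBBt : Bᵀ * B = B * Bᵀ := by rw [hB, Matrix.transpose_circulant]; exact hcomm _ _
  have hMt : Mᵀ = Matrix.fromBlocks Aᵀ B Bᵀ A := by
    rw [hM, Matrix.fromBlocks_transpose, Matrix.transpose_transpose, Matrix.transpose_transpose]
  have hMMT : M * Mᵀ = 1 := by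
    rw [hMt, hM, Matrix.fromBlocks_multiply, hABc, hAtBt, hAAt, hBBt,
      hMadd (B * A), hMadd (Aᵀ * Bᵀ), show B * Bᵀ + A * Aᵀ = 1 by rw [add_comm]; exact hAB,
      hAB, Matrix.fromBlocks_one]
  have hMtM : Mᵀ * M = 1 := mul_eq_one_comm.mp hMMT
  set G : Fin n ⊕ Fin n → ((Fin n ⊕ Fin n) ⊕ (Fin n ⊕ Fin n) → (Rkm k m)) :=
    fun i => Sum.elim (Pi.single i (1 : Rkm k m)) (M i) with hG
  -- generators pairwise orthogonal
  have keyGG : ∀ i j, ∑ p, G i p * G j p = 0 := by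
    intro i j
    rw [Fintype.sum_sum_type]
    have e1 : ∑ p, G i (Sum.inl p) * G j (Sum.inl p) = (1 : Matrix _ _ (Rkm k m)) i j := by
      simp [hG, Pi.single_apply, Matrix.one_apply, Finset.sum_ite_eq, eq_comm]
    have e2 : ∑ p, G i (Sum.inr p) * G j (Sum.inr p) = (M * Mᵀ) i j := by
      simp [hG, Matrix.mul_apply, Matrix.transpose_apply]
    rw [e1, e2, hMMT]
    exact h2 _
  have hGC : ∀ i, G i ∈ C := by
    intro i
    rw [hC]
    exact Submodule.subset_span ⟨i, rfl⟩
  ext w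
  simp only [SetLike.mem_coe, Set.mem_setOf_eq]
  constructor
  · -- C ⊆ dual
    intro hw x hx
    -- first: orthogonality with generators, by induction on x
    have L1 : ∀ x ∈ C, ∀ j, ∑ p, x p * G j p = 0 := by
      intro x hx j
      rw [hC] at hx
      induction hx using Submodule.span_induction with
      | mem y hy => obtain ⟨i, rfl⟩ := hy; exact keyGG i j
      | zero => simp
      | add y z _ _ hy hz =>
          simp only [Pi.add_apply, add_mul, Finset.sum_add_distrib, hy, hz, add_zero]
      | smul c y _ hy =>
          simp only [Pi.smul_apply, smul_eq_mul, mul_assoc, ← Finset.mul_sum, hy, mul_zero]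
    rw [hC] at hw
    induction hw using Submodule.span_induction with
    | mem y hy =>
        obtain ⟨j, rfl⟩ := hy; exact L1 x hx j
    | zero => simp
    | add y z _ _ hy hz =>
        simp only [Pi.add_apply, mul_add, Finset.sum_add_distrib, hy, hz, add_zero]
    | smul c y _ hy =>
        simp only [Pi.smul_apply, smul_eq_mul, mul_left_comm, ← Finset.mul_sum, hy, mul_zero]
  · -- dual ⊆ C
    intro hw
    have hweq : ∀ i, w (Sum.inl i) = ∑ q, M i q * w (Sum.inr q) := by
      intro i
      have h := hw (G i) (hGC i)
      rw [Fintype.sum_sum_type] at h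
      have e1 : ∑ p, G i (Sum.inl p) * w (Sum.inl p) = w (Sum.inl i) := by
        simp [hG, Pi.single_apply, ite_mul, one_mul, zero_mul, Finset.sum_ite_eq]
      have e2 : ∑ p, G i (Sum.inr p) * w (Sum.inr p) = ∑ q, M i q * w (Sum.inr q) := by
        simp [hG]
      rw [e1, e2] at h
      -- from a + b = 0 deduce a = b (char 2)
      have := congrArg (fun t => t + ∑ q, M i q * w (Sum.inr q)) h
      simpa [add_assoc, h2] using this
    have hrep : w = ∑ i, w (Sum.inl i) • G i := by
      funext p
      have hsum : (∑ i, w (Sum.inl i) • G i) p = ∑ i, w (Sum.inl i) * G i p := by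
        simp [Finset.sum_apply]
      rw [hsum]
      cases p with
      | inl p =>
          simp [hG, Pi.single_apply, mul_ite, Finset.sum_ite_eq]
      | inr q =>
          simp only [hG, Sum.elim_inr]
          calc w (Sum.inr q)
              = ∑ j, (1 : Matrix _ _ (Rkm k m)) j q * w (Sum.inr j) := by
                simp [Matrix.one_apply, ite_mul, Finset.sum_ite_eq, eq_comm]
            _ = ∑ j, (Mᵀ * M) j q * w (Sum.inr j) := by rw [hMtM]
            _ = ∑ j, (∑ i, M i j * M i q) * w (Sum.inr j) := by
                simp [Matrix.mul_apply, Matrix.transpose_apply]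
            _ = ∑ j, ∑ i, M i j * w (Sum.inr j) * M i q := by
                simp only [Finset.sum_mul]
                exact Finset.sum_congr rfl fun j _ => Finset.sum_congr rfl fun i _ => by ring
            _ = ∑ i, ∑ j, M i j * w (Sum.inr j) * M i q := Finset.sum_comm
            _ = ∑ i, (∑ j, M i j * w (Sum.inr j)) * M i q := by
                simp only [Finset.sum_mul]
            _ = ∑ i, w (Sum.inl i) * M i q := by
                exact Finset.sum_congr rfl fun i _ => by rw [hweq i]
      -- done
    rw [hrep]
    exact Submodule.sum_mem _ fun i _ => Submodule.smul_mem _ _ (hGC i)
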